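/- Let T > 0, T₁ := 1 ∨ T, and let (Ω, 𝓕, P) be a probability space. Let λ, γ ≥ 0, κ ∈ (0,1), q ∈ (κ,1), and set γ_λ := (λ + γ) ∨ 1. Let g : Ω × [0,T] → [0,∞) and Z : Ω × [0,T] → ℝ^{d×k} be jointly measurable processes, and let f : Ω × [0,T] × ℝ^{d×k} → ℝ^k be jointly measurable and satisfy, for all (ω,t) and z, z′ ∈ ℝ^{d×k}: |f(t,z) − f(t,z′)| ≤ λ|z − z′| and |f(t,z) − f(t,0)| ≤ γ (g_t + |z|)^κ. Then E ∫_0^T |f(r, Z_r)| dr ≤ E ∫_0^T |f(r,0)| dr + γ_λ · ( E ∫_0^T g_r dr )^{κ} · ( T^{1−q/2} E ( ∫_0^T |Z_r|^2 dr )^{q/2} )^{1−κ} + γ_λ · T^{1−κ/2} · ( E ( ∫_0^T |Z_r|^2 dr )^{q/2} )^{κ/q}. -/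

import Mathlib

open MeasureTheory Set
open scoped ENNReal

lemma stmt14_holder {α : Type*} [MeasurableSpace α] (μ : Measure α) {u v : α → ℝ≥0∞}
    (hu : AEMeasurable u μ) (hv : AEMeasurable v μ) {s : ℝ} (hs0 : 0 < s) (hs1 : s < 1) :
    ∫⁻ a, u a ^ s * v a ^ (1 - s) ∂μ ≤ (∫⁻ a, u a ∂μ) ^ s * (∫⁻ a, v a ∂μ) ^ (1 - s) := by
  have hcon : (1 / s).HolderConjugate (1 / (1 - s)) :=
    Real.holderConjugate_one_div hs0 (by linarith) (by ring)
  have key := ENNReal.lintegral_mul_le_Lp_mul_Lq μ hcon (hu.pow_const s) (hv.pow_const (1 - s))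
  simp only [Pi.mul_apply] at key
  have e1 : ∀ a, (u a ^ s) ^ (1 / s) = u a := fun a => by
    rw [← ENNReal.rpow_mul, mul_one_div_cancel hs0.ne', ENNReal.rpow_one]
  have e2 : ∀ a, (v a ^ (1 - s)) ^ (1 / (1 - s)) = v a := fun a => by
    rw [← ENNReal.rpow_mul, mul_one_div_cancel (by linarith : (1:ℝ) - s ≠ 0), ENNReal.rpow_one]
  simp only [e1, e2, one_div_one_div] at key
  exact key

lemma stmt14_jensen {α : Type*} [MeasurableSpace α] (μ : Measure α) {u : α → ℝ≥0∞}
    (hu : AEMeasurable u μ) {s : ℝ} (hs0 : 0 < s) (hs1 : s < 1) :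
    ∫⁻ a, u a ^ s ∂μ ≤ (∫⁻ a, u a ∂μ) ^ s * (μ Set.univ) ^ (1 - s) := by
  have := stmt14_holder μ hu (aemeasurable_const (b := (1 : ℝ≥0∞))) hs0 hs1
  simpa [ENNReal.one_rpow, lintegral_one] using this

lemma stmt14_pt {lam γ κ q gv z D : ℝ} (hlam : 0 ≤ lam) (hγ : 0 ≤ γ)
    (hκ0 : 0 < κ) (hκ1 : κ < 1) (hq0 : 0 < q) (hq1 : q < 1)
    (hg : 0 ≤ gv) (hz : 0 ≤ z)
    (h1 : D ≤ lam * z) (h2 : D ≤ γ * (gv + z) ^ κ) :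
    D ≤ max (lam + γ) 1 * (gv ^ κ * z ^ (q * (1 - κ)) + z ^ κ) := by
  set M := max (lam + γ) 1 with hM
  have hM1 : (1:ℝ) ≤ M := le_max_right _ _
  have hMlam : lam ≤ M := le_trans (by linarith) (le_max_left _ _)
  have hMγ : γ ≤ M := le_trans (by linarith) (le_max_left _ _)
  have hM0 : (0:ℝ) ≤ M := by linarith
  have hgk : 0 ≤ gv ^ κ := Real.rpow_nonneg hg κ
  have hzk : 0 ≤ z ^ κ := Real.rpow_nonneg hz κ
  have hze : 0 ≤ z ^ (q * (1 - κ)) := Real.rpow_nonneg hz _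
  rcases le_or_gt 1 z with h | h
  · have hsub : (gv + z) ^ κ ≤ gv ^ κ + z ^ κ := by
      have key := NNReal.rpow_add_le_add_rpow gv.toNNReal z.toNNReal hκ0.le hκ1.le
      rw [← Real.toNNReal_add hg hz] at key
      have key' := NNReal.coe_le_coe.2 key
      simpa [NNReal.coe_rpow, Real.coe_toNNReal _ hg, Real.coe_toNNReal _ hz,
        Real.coe_toNNReal _ (add_nonneg hg hz)] using key'
    have hone : (1:ℝ) ≤ z ^ (q * (1 - κ)) :=
      Real.one_le_rpow h (by nlinarith)
    have hstep : gv ^ κ + z ^ κ ≤ gv ^ κ * z ^ (q * (1 - κ)) + z ^ κ := by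
      have := le_mul_of_one_le_right hgk hone
      linarith
    calc D ≤ γ * (gv + z) ^ κ := h2
      _ ≤ M * (gv ^ κ + z ^ κ) :=
          mul_le_mul hMγ hsub (Real.rpow_nonneg (add_nonneg hg hz) κ) hM0
      _ ≤ M * (gv ^ κ * z ^ (q * (1 - κ)) + z ^ κ) :=
          mul_le_mul_of_nonneg_left hstep hM0
  · have hzzk : z ≤ z ^ κ := by
      rcases eq_or_lt_of_le hz with h0 | h0
      · rw [← h0, Real.zero_rpow hκ0.ne']
      · calc z = z ^ (1:ℝ) := (Real.rpow_one z).symm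
          _ ≤ z ^ κ := Real.rpow_le_rpow_of_exponent_ge h0 h.le hκ1.le
    calc D ≤ lam * z := h1
      _ ≤ M * z ^ κ := mul_le_mul hMlam hzzk hz hM0
      _ ≤ M * (gv ^ κ * z ^ (q * (1 - κ)) + z ^ κ) := by
          have h1' : 0 ≤ gv ^ κ * z ^ (q * (1 - κ)) := mul_nonneg hgk hze
          nlinarith


set_option maxHeartbeats 1000000

/-- Assembled inequalities (eq.split8)–(eq.split11) from the proof of Theorem 3.5(ii):
for a generator `f(t,z)` that is `λ`-Lipschitz in `z` and has sublinear growth of order `κ`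
in `z` with weight `g`,
`E∫_0^T |f(r,Z_r)| ≤ E∫_0^T |f(r,0)| + γ_λ (E∫_0^T g)^κ (T^{1−q/2} E(∫_0^T |Z|²)^{q/2})^{1−κ}
+ γ_λ T^{1−κ/2} (E(∫_0^T |Z|²)^{q/2})^{κ/q}` where `γ_λ = (λ+γ) ∨ 1`.
All expectations may be infinite. -/
theorem stmt_14 {Ω : Type*} [MeasurableSpace Ω] (P : Measure Ω) [IsProbabilityMeasure P]
    (T : ℝ) (hT : 0 < T) (d k : ℕ)
    (lam γ : ℝ) (hlam : 0 ≤ lam) (hγ : 0 ≤ γ)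
    (κ q : ℝ) (hκ : κ ∈ Set.Ioo (0:ℝ) 1) (hq : q ∈ Set.Ioo κ 1)
    (g : Ω → ℝ → ℝ) (hgmeas : Measurable (Function.uncurry g)) (hg0 : ∀ ω r, 0 ≤ g ω r)
    (Z : Ω → ℝ → EuclideanSpace ℝ (Fin d × Fin k))
    (hZmeas : Measurable (Function.uncurry Z))
    (f : Ω → ℝ → EuclideanSpace ℝ (Fin d × Fin k) → EuclideanSpace ℝ (Fin k))
    (hfmeas : Measurable fun p : Ω × ℝ × EuclideanSpace ℝ (Fin d × Fin k) =>
      f p.1 p.2.1 p.2.2)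
    (hLip : ∀ ω t (z z' : EuclideanSpace ℝ (Fin d × Fin k)),
      ‖f ω t z - f ω t z'‖ ≤ lam * ‖z - z'‖)
    (hGrowth : ∀ ω t (z : EuclideanSpace ℝ (Fin d × Fin k)),
      ‖f ω t z - f ω t 0‖ ≤ γ * (g ω t + ‖z‖) ^ κ) :
    ∫⁻ ω, (∫⁻ r in Icc (0:ℝ) T, ENNReal.ofReal ‖f ω r (Z ω r)‖) ∂P
      ≤ (∫⁻ ω, (∫⁻ r in Icc (0:ℝ) T, ENNReal.ofReal ‖f ω r 0‖) ∂P)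
        + ENNReal.ofReal (max (lam + γ) 1) *
            (∫⁻ ω, (∫⁻ r in Icc (0:ℝ) T, ENNReal.ofReal (g ω r)) ∂P) ^ κ *
            (ENNReal.ofReal (T ^ (1 - q / 2)) *
              ∫⁻ ω, (∫⁻ r in Icc (0:ℝ) T, ENNReal.ofReal (‖Z ω r‖ ^ 2)) ^ (q / 2) ∂P) ^ (1 - κ)
        + ENNReal.ofReal (max (lam + γ) 1) * ENNReal.ofReal (T ^ (1 - κ / 2)) *
            (∫⁻ ω, (∫⁻ r in Icc (0:ℝ) T, ENNReal.ofReal (‖Z ω r‖ ^ 2)) ^ (q / 2) ∂P) ^ (κ / q) := by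
  obtain ⟨hκ0, hκ1⟩ := hκ
  obtain ⟨hqκ, hq1⟩ := hq
  have hq0 : 0 < q := hκ0.trans hqκ
  have hqne : q ≠ 0 := hq0.ne'
  set μT : Measure ℝ := volume.restrict (Icc (0:ℝ) T) with hμTdef
  have hμTuniv : μT Set.univ = ENNReal.ofReal T := by
    rw [hμTdef, Measure.restrict_apply_univ, Real.volume_Icc, sub_zero]
  -- measurability facts
  have mZ : Measurable fun p : Ω × ℝ => Z p.1 p.2 := hZmeas
  have mZn : Measurable fun p : Ω × ℝ => ENNReal.ofReal ‖Z p.1 p.2‖ := mZ.norm.ennreal_ofReal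
  have mZ2 : Measurable fun p : Ω × ℝ => ENNReal.ofReal (‖Z p.1 p.2‖ ^ 2) :=
    (mZ.norm.pow_const 2).ennreal_ofReal
  have mg' : Measurable fun p : Ω × ℝ => ENNReal.ofReal (g p.1 p.2) := hgmeas.ennreal_ofReal
  have mfZ : Measurable fun p : Ω × ℝ => ENNReal.ofReal ‖f p.1 p.2 (Z p.1 p.2)‖ :=
    ((hfmeas.comp (measurable_fst.prodMk (measurable_snd.prodMk mZ))).norm).ennreal_ofReal
  have mf0 : Measurable fun p : Ω × ℝ => ENNReal.ofReal ‖f p.1 p.2 0‖ :=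
    ((hfmeas.comp (measurable_fst.prodMk
      (measurable_snd.prodMk measurable_const))).norm).ennreal_ofReal
  set C := ENNReal.ofReal (max (lam + γ) 1) with hCdef
  set Sq := ∫⁻ ω, (∫⁻ r, ENNReal.ofReal (‖Z ω r‖ ^ 2) ∂μT) ^ (q / 2) ∂P with hSqdef
  set GG := ∫⁻ ω, (∫⁻ r, ENNReal.ofReal (g ω r) ∂μT) ∂P with hGGdef
  set T1 := ∫⁻ ω, (∫⁻ r, ENNReal.ofReal ‖f ω r 0‖ ∂μT) ∂P with hT1def
  have hC1 : (0:ℝ) ≤ max (lam + γ) 1 := le_trans zero_le_one (le_max_right _ _)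
  have he0 : (0:ℝ) ≤ q * (1 - κ) := mul_nonneg hq0.le (by linarith)
  -- pointwise bound
  have hpt : ∀ ω r, ENNReal.ofReal ‖f ω r (Z ω r)‖ ≤
      ENNReal.ofReal ‖f ω r 0‖ +
        (C * ((ENNReal.ofReal (g ω r)) ^ κ * (ENNReal.ofReal ‖Z ω r‖) ^ (q * (1 - κ))) +
          C * (ENNReal.ofReal ‖Z ω r‖) ^ κ) := by
    intro ω r
    have htri : ‖f ω r (Z ω r)‖ ≤ ‖f ω r 0‖ + ‖f ω r (Z ω r) - f ω r 0‖ := by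
      have := norm_sub_norm_le (f ω r (Z ω r)) (f ω r 0)
      linarith
    have hD1 := hLip ω r (Z ω r) 0
    rw [sub_zero] at hD1
    have hD2 := hGrowth ω r (Z ω r)
    have hkey := stmt14_pt hlam hγ hκ0 hκ1 hq0 hq1 (hg0 ω r) (norm_nonneg (Z ω r)) hD1 hD2
    have hgk : (0:ℝ) ≤ g ω r ^ κ := Real.rpow_nonneg (hg0 ω r) κ
    have hzk : (0:ℝ) ≤ ‖Z ω r‖ ^ κ := Real.rpow_nonneg (norm_nonneg _) κ
    have hze : (0:ℝ) ≤ ‖Z ω r‖ ^ (q * (1 - κ)) := Real.rpow_nonneg (norm_nonneg _) _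
    have hreal : ‖f ω r (Z ω r)‖ ≤ ‖f ω r 0‖ +
        (max (lam + γ) 1 * (g ω r ^ κ * ‖Z ω r‖ ^ (q * (1 - κ))) +
          max (lam + γ) 1 * ‖Z ω r‖ ^ κ) := by nlinarith [hkey, htri]
    calc ENNReal.ofReal ‖f ω r (Z ω r)‖
        ≤ ENNReal.ofReal (‖f ω r 0‖ +
            (max (lam + γ) 1 * (g ω r ^ κ * ‖Z ω r‖ ^ (q * (1 - κ))) +
              max (lam + γ) 1 * ‖Z ω r‖ ^ κ)) := ENNReal.ofReal_le_ofReal hreal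
      _ = ENNReal.ofReal ‖f ω r 0‖ +
            (C * ((ENNReal.ofReal (g ω r)) ^ κ * (ENNReal.ofReal ‖Z ω r‖) ^ (q * (1 - κ))) +
              C * (ENNReal.ofReal ‖Z ω r‖) ^ κ) := by
          rw [ENNReal.ofReal_add (norm_nonneg _) (by positivity),
            ENNReal.ofReal_add (by positivity) (by positivity),
            ENNReal.ofReal_mul hC1, ENNReal.ofReal_mul hC1,
            ENNReal.ofReal_mul hgk,
            ← ENNReal.ofReal_rpow_of_nonneg (hg0 ω r) hκ0.le,
            ← ENNReal.ofReal_rpow_of_nonneg (norm_nonneg _) he0,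
            ← ENNReal.ofReal_rpow_of_nonneg (norm_nonneg _) hκ0.le, hCdef]
  -- per-omega measurable (in r) functions
  have mAr : ∀ ω : Ω, Measurable fun r : ℝ => ENNReal.ofReal ‖f ω r 0‖ :=
    fun ω => by have h := mf0.comp (measurable_prodMk_left (x := ω)); exact h
  have mBr : ∀ ω : Ω, Measurable fun r : ℝ =>
      (ENNReal.ofReal (g ω r)) ^ κ * (ENNReal.ofReal ‖Z ω r‖) ^ (q * (1 - κ)) :=
    fun ω => by
      have h := (((mg'.comp (measurable_prodMk_left (x := ω))).pow_const κ).mul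
        ((mZn.comp (measurable_prodMk_left (x := ω))).pow_const (q * (1 - κ))))
      exact h
  have mKr : ∀ ω : Ω, Measurable fun r : ℝ => (ENNReal.ofReal ‖Z ω r‖) ^ κ :=
    fun ω => by have h := (mZn.comp (measurable_prodMk_left (x := ω))).pow_const κ; exact h
  -- omega-level measurability
  have MFA : Measurable fun ω => ∫⁻ r, ENNReal.ofReal ‖f ω r 0‖ ∂μT :=
    by have h := mf0.lintegral_prod_right' (ν := μT); exact h
  have MFB : Measurable fun ω => ∫⁻ r,
      (ENNReal.ofReal (g ω r)) ^ κ * (ENNReal.ofReal ‖Z ω r‖) ^ (q * (1 - κ)) ∂μT :=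
    by
      have h := (((mg'.pow_const κ).mul
        (mZn.pow_const (q * (1 - κ))))).lintegral_prod_right' (ν := μT)
      exact h
  have MFK : Measurable fun ω => ∫⁻ r, (ENNReal.ofReal ‖Z ω r‖) ^ κ ∂μT :=
    by have h := (mZn.pow_const κ).lintegral_prod_right' (ν := μT); exact h
  have MZI : Measurable fun ω => ∫⁻ r, ENNReal.ofReal (‖Z ω r‖ ^ 2) ∂μT :=
    by have h := mZ2.lintegral_prod_right' (ν := μT); exact h
  -- step 1: split the integral
  have step1 : ∫⁻ ω, (∫⁻ r, ENNReal.ofReal ‖f ω r (Z ω r)‖ ∂μT) ∂P ≤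
      T1 + (C * ∫⁻ ω, (∫⁻ r, (ENNReal.ofReal (g ω r)) ^ κ *
              (ENNReal.ofReal ‖Z ω r‖) ^ (q * (1 - κ)) ∂μT) ∂P
          + C * ∫⁻ ω, (∫⁻ r, (ENNReal.ofReal ‖Z ω r‖) ^ κ ∂μT) ∂P) := by
    have mono1 : ∫⁻ ω, (∫⁻ r, ENNReal.ofReal ‖f ω r (Z ω r)‖ ∂μT) ∂P ≤
        ∫⁻ ω, (∫⁻ r, (ENNReal.ofReal ‖f ω r 0‖ +
          (C * ((ENNReal.ofReal (g ω r)) ^ κ * (ENNReal.ofReal ‖Z ω r‖) ^ (q * (1 - κ))) +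
            C * (ENNReal.ofReal ‖Z ω r‖) ^ κ)) ∂μT) ∂P :=
      lintegral_mono fun ω => lintegral_mono fun r => hpt ω r
    refine mono1.trans_eq ?_
    have inner : ∀ ω, (∫⁻ r, (ENNReal.ofReal ‖f ω r 0‖ +
          (C * ((ENNReal.ofReal (g ω r)) ^ κ * (ENNReal.ofReal ‖Z ω r‖) ^ (q * (1 - κ))) +
            C * (ENNReal.ofReal ‖Z ω r‖) ^ κ)) ∂μT)
        = (∫⁻ r, ENNReal.ofReal ‖f ω r 0‖ ∂μT) +
            (C * ∫⁻ r, (ENNReal.ofReal (g ω r)) ^ κ *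
                (ENNReal.ofReal ‖Z ω r‖) ^ (q * (1 - κ)) ∂μT +
              C * ∫⁻ r, (ENNReal.ofReal ‖Z ω r‖) ^ κ ∂μT) := by
      intro ω
      rw [lintegral_add_left (mAr ω), lintegral_add_left ((mBr ω).const_mul C),
        lintegral_const_mul C (mBr ω), lintegral_const_mul C (mKr ω)]
    simp_rw [inner]
    rw [lintegral_add_left MFA, lintegral_add_left (MFB.const_mul C),
      lintegral_const_mul C MFB, lintegral_const_mul C MFK]
  -- inner time-Hölder estimates
  have hq2 : 0 < q / 2 := by linarith
  have hq2' : q / 2 < 1 := by linarith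
  have hκ2 : 0 < κ / 2 := by linarith
  have hκ2' : κ / 2 < 1 := by linarith
  have hZq2 : ∀ (ω : Ω) (r : ℝ) (s : ℝ),
      (ENNReal.ofReal ‖Z ω r‖) ^ s = (ENNReal.ofReal (‖Z ω r‖ ^ 2)) ^ (s / 2) := by
    intro ω r s
    rw [ENNReal.ofReal_pow (norm_nonneg _), ← ENNReal.rpow_natCast, ← ENNReal.rpow_mul]
    congr 1
    ring
  have innerq : ∀ ω, ∫⁻ r, (ENNReal.ofReal ‖Z ω r‖) ^ q ∂μT ≤
      (∫⁻ r, ENNReal.ofReal (‖Z ω r‖ ^ 2) ∂μT) ^ (q / 2) * (ENNReal.ofReal T) ^ (1 - q / 2) := by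
    intro ω
    have hmr : Measurable fun r : ℝ => ENNReal.ofReal (‖Z ω r‖ ^ 2) := by
      have h := mZ2.comp (measurable_prodMk_left (x := ω)); exact h
    have hj := stmt14_jensen μT (u := fun r : ℝ => ENNReal.ofReal (‖Z ω r‖ ^ 2))
      hmr.aemeasurable hq2 hq2'
    rw [hμTuniv] at hj
    calc ∫⁻ r, (ENNReal.ofReal ‖Z ω r‖) ^ q ∂μT
        = ∫⁻ r, (ENNReal.ofReal (‖Z ω r‖ ^ 2)) ^ (q / 2) ∂μT :=
          lintegral_congr fun r => hZq2 ω r q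
      _ ≤ _ := hj
  have innerκ : ∀ ω, ∫⁻ r, (ENNReal.ofReal ‖Z ω r‖) ^ κ ∂μT ≤
      (∫⁻ r, ENNReal.ofReal (‖Z ω r‖ ^ 2) ∂μT) ^ (κ / 2) * (ENNReal.ofReal T) ^ (1 - κ / 2) := by
    intro ω
    have hmr : Measurable fun r : ℝ => ENNReal.ofReal (‖Z ω r‖ ^ 2) := by
      have h := mZ2.comp (measurable_prodMk_left (x := ω)); exact h
    have hj := stmt14_jensen μT (u := fun r : ℝ => ENNReal.ofReal (‖Z ω r‖ ^ 2))
      hmr.aemeasurable hκ2 hκ2'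
    rw [hμTuniv] at hj
    calc ∫⁻ r, (ENNReal.ofReal ‖Z ω r‖) ^ κ ∂μT
        = ∫⁻ r, (ENNReal.ofReal (‖Z ω r‖ ^ 2)) ^ (κ / 2) ∂μT :=
          lintegral_congr fun r => hZq2 ω r κ
      _ ≤ _ := hj
  -- T2 bound
  have hT2 : ∫⁻ ω, (∫⁻ r, (ENNReal.ofReal (g ω r)) ^ κ *
        (ENNReal.ofReal ‖Z ω r‖) ^ (q * (1 - κ)) ∂μT) ∂P
      ≤ GG ^ κ * (ENNReal.ofReal (T ^ (1 - q / 2)) * Sq) ^ (1 - κ) := by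
    have hhold := stmt14_holder (P.prod μT)
      (u := fun p : Ω × ℝ => ENNReal.ofReal (g p.1 p.2))
      (v := fun p : Ω × ℝ => (ENNReal.ofReal ‖Z p.1 p.2‖) ^ q)
      mg'.aemeasurable ((mZn.pow_const q)).aemeasurable hκ0 hκ1
    have hprodmeas : Measurable fun p : Ω × ℝ =>
        (ENNReal.ofReal (g p.1 p.2)) ^ κ * ((ENNReal.ofReal ‖Z p.1 p.2‖) ^ q) ^ (1 - κ) :=
      (mg'.pow_const κ).mul ((mZn.pow_const q).pow_const (1 - κ))
    calc ∫⁻ ω, (∫⁻ r, (ENNReal.ofReal (g ω r)) ^ κ *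
          (ENNReal.ofReal ‖Z ω r‖) ^ (q * (1 - κ)) ∂μT) ∂P
        = ∫⁻ p, (ENNReal.ofReal (g p.1 p.2)) ^ κ *
            ((ENNReal.ofReal ‖Z p.1 p.2‖) ^ q) ^ (1 - κ) ∂(P.prod μT) := by
          simp_rw [← ENNReal.rpow_mul]
          have h := (lintegral_prod (μ := P) (ν := μT)
            (fun p : Ω × ℝ => (ENNReal.ofReal (g p.1 p.2)) ^ κ *
              (ENNReal.ofReal ‖Z p.1 p.2‖) ^ (q * (1 - κ)))
            ((mg'.pow_const κ).mul (mZn.pow_const (q * (1 - κ)))).aemeasurable).symm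
          exact h
      _ ≤ (∫⁻ p, ENNReal.ofReal (g p.1 p.2) ∂(P.prod μT)) ^ κ *
            (∫⁻ p, (ENNReal.ofReal ‖Z p.1 p.2‖) ^ q ∂(P.prod μT)) ^ (1 - κ) := hhold
      _ = GG ^ κ * (∫⁻ ω, (∫⁻ r, (ENNReal.ofReal ‖Z ω r‖) ^ q ∂μT) ∂P) ^ (1 - κ) := by
          rw [lintegral_prod _ mg'.aemeasurable,
            lintegral_prod _ (mZn.pow_const q).aemeasurable]
      _ ≤ GG ^ κ * (ENNReal.ofReal (T ^ (1 - q / 2)) * Sq) ^ (1 - κ) := by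
          refine mul_le_mul_right (ENNReal.rpow_le_rpow ?_ (by linarith)) _
          calc ∫⁻ ω, (∫⁻ r, (ENNReal.ofReal ‖Z ω r‖) ^ q ∂μT) ∂P
              ≤ ∫⁻ ω, (∫⁻ r, ENNReal.ofReal (‖Z ω r‖ ^ 2) ∂μT) ^ (q / 2) *
                  (ENNReal.ofReal T) ^ (1 - q / 2) ∂P := lintegral_mono fun ω => innerq ω
            _ = Sq * (ENNReal.ofReal T) ^ (1 - q / 2) :=
                lintegral_mul_const _ (MZI.pow_const _)
            _ = ENNReal.ofReal (T ^ (1 - q / 2)) * Sq := by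
                rw [mul_comm, ENNReal.ofReal_rpow_of_pos hT]
  -- T3 bound
  have hκq0 : 0 < κ / q := div_pos hκ0 hq0
  have hκq1 : κ / q < 1 := (div_lt_one hq0).2 hqκ
  have hT3 : ∫⁻ ω, (∫⁻ r, (ENNReal.ofReal ‖Z ω r‖) ^ κ ∂μT) ∂P
      ≤ ENNReal.ofReal (T ^ (1 - κ / 2)) * Sq ^ (κ / q) := by
    calc ∫⁻ ω, (∫⁻ r, (ENNReal.ofReal ‖Z ω r‖) ^ κ ∂μT) ∂P
        ≤ ∫⁻ ω, (∫⁻ r, ENNReal.ofReal (‖Z ω r‖ ^ 2) ∂μT) ^ (κ / 2) *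
            (ENNReal.ofReal T) ^ (1 - κ / 2) ∂P := lintegral_mono fun ω => innerκ ω
      _ = (∫⁻ ω, (∫⁻ r, ENNReal.ofReal (‖Z ω r‖ ^ 2) ∂μT) ^ (κ / 2) ∂P) *
            (ENNReal.ofReal T) ^ (1 - κ / 2) := lintegral_mul_const _ (MZI.pow_const _)
      _ = (∫⁻ ω, ((∫⁻ r, ENNReal.ofReal (‖Z ω r‖ ^ 2) ∂μT) ^ (q / 2)) ^ (κ / q) ∂P) *
            (ENNReal.ofReal T) ^ (1 - κ / 2) := by
          congr 1
          refine lintegral_congr fun ω => ?_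
          rw [← ENNReal.rpow_mul]
          congr 1
          field_simp
      _ ≤ (Sq ^ (κ / q) * (P Set.univ) ^ (1 - κ / q)) * (ENNReal.ofReal T) ^ (1 - κ / 2) :=
          mul_le_mul_left
            (stmt14_jensen P (MZI.pow_const _).aemeasurable hκq0 hκq1) _
      _ = ENNReal.ofReal (T ^ (1 - κ / 2)) * Sq ^ (κ / q) := by
          rw [measure_univ, ENNReal.one_rpow, mul_one, mul_comm,
            ENNReal.ofReal_rpow_of_pos hT]
  -- assemble
  refine step1.trans ?_
  rw [add_assoc]
  refine add_le_add_right (add_le_add ?_ ?_) T1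
  · rw [mul_assoc]
    exact mul_le_mul_right hT2 C
  · rw [mul_assoc]
    exact mul_le_mul_right hT3 C
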